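/- Let P_25 be the path graph on 25 vertices. Then: (a) P_25 has a burning sequence of length 5 (indeed b(P_25) = ⌈√25⌉ = 5); and (b) there exists a sequence of vertices u_1, …, u_5 satisfying the greedy condition of the heuristic Gr with guess p = 5 — for every i ∈ {1, …, 5} and every vertex w, |N_{5−i}[w] \ B_{i−1}| ≤ |N_{5−i}[u_i] \ B_{i−1}|, where B_{i−1} = ⋃_{j<i} N_{5−j}[u_j] and B_0 = ∅ — such that B_5 is not the whole vertex set. That is, even when run with the correct guess p = b(G), the greedy heuristic Gr may fail to return a burning sequence on a path. -/

import Mathlib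

/-- The closed ball `N_r[v] = {w : dist w v ≤ r}` of radius `r` around `v`. -/
noncomputable def closedBall {V : Type*} [Fintype V] (G : SimpleGraph V) (r : ℕ) (v : V) :
    Finset V :=
  Finset.univ.filter (fun w => G.dist w v ≤ r)

/-- The set `B_i` of vertices covered after the first `i` steps of the greedy burning
heuristic with guess `p` and selected vertices `u 0, u 1, …`: the union of the balls
`N_{p-(j+1)}[u j]` for `j < i`. -/
noncomputable def greedyCovered {V : Type*} [Fintype V] [DecidableEq V] (G : SimpleGraph V)
    (p : ℕ) (u : ℕ → V) (i : ℕ) : Finset V :=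
  (Finset.range i).biUnion (fun j => closedBall G (p - (j + 1)) (u j))

open SimpleGraph

lemma path25_conn : (pathGraph 25).Connected := pathGraph_connected 24

lemma dist_le_natDist : ∀ (d : ℕ) (i j : Fin 25), Nat.dist i.1 j.1 = d →
    (pathGraph 25).dist i j ≤ d := by
  intro d
  induction d with
  | zero =>
    intro i j h
    have : i = j := Fin.ext (Nat.eq_of_dist_eq_zero h)
    simp [this]
  | succ d ih =>
    intro i j h
    rcases lt_trichotomy i.1 j.1 with hlt | heq | hgt
    · have hk : i.1 + 1 < 25 := lt_of_le_of_lt hlt j.2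
      set k : Fin 25 := ⟨i.1 + 1, hk⟩ with hkdef
      have hadj : (pathGraph 25).Adj i k := by
        rw [pathGraph_adj]; left; rfl
      have h1 : (pathGraph 25).dist i k = 1 := (dist_eq_one_iff_adj).2 hadj
      have h2 : (pathGraph 25).dist k j ≤ d := by
        apply ih
        simp only [hkdef, Nat.dist] at h ⊢
        omega
      calc (pathGraph 25).dist i j ≤ (pathGraph 25).dist i k + (pathGraph 25).dist k j :=
            path25_conn.dist_triangle
        _ ≤ 1 + d := by omega
        _ = d + 1 := by omega
    · exfalso; rw [heq] at h; simp [Nat.dist_self] at h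
    · have hk : j.1 + 1 < 25 := lt_of_le_of_lt hgt i.2
      set k : Fin 25 := ⟨j.1 + 1, hk⟩ with hkdef
      have hadj : (pathGraph 25).Adj k j := by
        rw [pathGraph_adj]; right; rfl
      have h1 : (pathGraph 25).dist k j = 1 := (dist_eq_one_iff_adj).2 hadj
      have h2 : (pathGraph 25).dist i k ≤ d := by
        apply ih
        simp only [hkdef, Nat.dist] at h ⊢
        omega
      calc (pathGraph 25).dist i j ≤ (pathGraph 25).dist i k + (pathGraph 25).dist k j :=
            path25_conn.dist_triangle
        _ ≤ d + 1 := by omega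

lemma natDist_le_walk_length {i j : Fin 25} (w : (pathGraph 25).Walk i j) :
    Nat.dist i.1 j.1 ≤ w.length := by
  induction w with
  | nil => simp [Nat.dist_self]
  | cons hadj w ih =>
    rename_i a b c
    rw [pathGraph_adj] at hadj
    have h1 : Nat.dist a.1 b.1 = 1 := by unfold Nat.dist; omega
    have := Nat.dist.triangle_inequality a.1 b.1 c.1
    simp only [SimpleGraph.Walk.length_cons]
    omega

lemma path25_dist (i j : Fin 25) : (pathGraph 25).dist i j = Nat.dist i.1 j.1 := by
  obtain ⟨w, hw⟩ := path25_conn.exists_walk_length_eq_dist i j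
  have h1 := dist_le_natDist (Nat.dist i.1 j.1) i j rfl
  have h2 := natDist_le_walk_length w
  omega

def cball (r : ℕ) (v : Fin 25) : Finset (Fin 25) :=
  Finset.univ.filter (fun w => Nat.dist w.1 v.1 ≤ r)

def gcov (p : ℕ) (u : ℕ → Fin 25) (i : ℕ) : Finset (Fin 25) :=
  (Finset.range i).biUnion (fun j => cball (p - (j + 1)) (u j))

lemma closedBall_eq (r : ℕ) (v : Fin 25) : closedBall (pathGraph 25) r v = cball r v := by
  ext w
  simp [closedBall, cball, path25_dist]

lemma greedyCovered_eq (p : ℕ) (u : ℕ → Fin 25) (i : ℕ) :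
    greedyCovered (pathGraph 25) p u i = gcov p u i := by
  unfold greedyCovered gcov
  simp [closedBall_eq]

def myu : ℕ → Fin 25 := fun n =>
  match n with
  | 0 => 4 | 1 => 12 | 2 => 20 | 3 => 23 | _ => 16

lemma cball_card_le (r : ℕ) (v : Fin 25) : (cball r v).card ≤ 2 * r + 1 := by
  have h : (cball r v).card ≤ (Finset.Icc (v.1 - r) (v.1 + r)).card := by
    apply Finset.card_le_card_of_injOn Fin.val
    · intro w hw
      simp only [cball, Finset.mem_coe, Finset.mem_filter, Finset.mem_univ, true_and] at hw
      simp only [Nat.dist] at hw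
      simp only [Finset.mem_coe, Finset.mem_Icc]
      omega
    · exact fun a _ b _ h => Fin.ext h
  rw [Nat.card_Icc] at h
  omega

lemma sum_odd (p : ℕ) : ∑ i ∈ Finset.range p, (2 * i + 1) = p ^ 2 := by
  induction p with
  | zero => simp
  | succ n ih => rw [Finset.sum_range_succ, ih]; ring

lemma no_short_burning (p : ℕ) (hp : p < 5) :
    ¬ ∃ u : Fin p → Fin 25, ∀ v : Fin 25, ∃ i : Fin p,
      (SimpleGraph.pathGraph 25).dist v (u i) ≤ p - (i.1 + 1) := by
  rintro ⟨u, hu⟩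
  have hsub : (Finset.univ : Finset (Fin 25)) ⊆
      Finset.univ.biUnion (fun i : Fin p => cball (p - (i.1 + 1)) (u i)) := by
    intro v _
    obtain ⟨i, hi⟩ := hu v
    rw [path25_dist] at hi
    simp only [Finset.mem_biUnion]
    exact ⟨i, Finset.mem_univ i, by simp [cball, hi]⟩
  have h1 : (25 : ℕ) ≤ ∑ i : Fin p, (cball (p - (i.1 + 1)) (u i)).card := by
    calc (25 : ℕ) = (Finset.univ : Finset (Fin 25)).card := by simp
      _ ≤ (Finset.univ.biUnion (fun i : Fin p => cball (p - (i.1 + 1)) (u i))).card :=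
          Finset.card_le_card hsub
      _ ≤ ∑ i : Fin p, (cball (p - (i.1 + 1)) (u i)).card := Finset.card_biUnion_le
  have h2 : ∑ i : Fin p, (cball (p - (i.1 + 1)) (u i)).card
      ≤ ∑ i : Fin p, (2 * (p - (i.1 + 1)) + 1) :=
    Finset.sum_le_sum fun i _ => cball_card_le _ _
  have h3 : ∑ i : Fin p, (2 * (p - (i.1 + 1)) + 1) = p ^ 2 := by
    rw [Fin.sum_univ_eq_sum_range (fun i => 2 * (p - (i + 1)) + 1)]
    rw [← sum_odd p, ← Finset.sum_range_reflect (fun i => 2 * i + 1) p]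
    apply Finset.sum_congr rfl
    intro i hi
    simp only [Finset.mem_range] at hi
    omega
  have : p ^ 2 < 25 := by nlinarith
  omega

lemma burn5 : ∀ v : Fin 25, ∃ i : Fin 5,
    (SimpleGraph.pathGraph 25).dist v ((![4, 12, 18, 22, 24] : Fin 5 → Fin 25) i)
      ≤ 5 - (i.1 + 1) := by
  intro v
  have h : ∀ v : Fin 25, ∃ i : Fin 5,
      Nat.dist v.1 ((![4, 12, 18, 22, 24] : Fin 5 → Fin 25) i).1 ≤ 5 - (i.1 + 1) := by decide
  obtain ⟨i, hi⟩ := h v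
  exact ⟨i, by rw [path25_dist]; exact hi⟩


/-- Proposition 3: (a) the path `P_25` has a burning sequence of length 5,
and indeed its burning number equals `5 = ⌈√25⌉`; (b) there is a run of the greedy
heuristic Gr with the correct guess `p = 5` (each `u i` maximizing the number of newly
covered vertices) whose final covered set `B_5` is not the whole vertex set, i.e. Gr may
fail to return a burning sequence on a path. -/
theorem greedy_may_fail_on_path_P25 :
    (∃ u : Fin 5 → Fin 25, ∀ v : Fin 25, ∃ i : Fin 5,
      (SimpleGraph.pathGraph 25).dist v (u i) ≤ 5 - (i.1 + 1)) ∧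
    sInf {p : ℕ | ∃ u : Fin p → Fin 25, ∀ v : Fin 25, ∃ i : Fin p,
      (SimpleGraph.pathGraph 25).dist v (u i) ≤ p - (i.1 + 1)} = 5 ∧
    5 = Nat.ceil (Real.sqrt 25) ∧
    ∃ u : ℕ → Fin 25,
      (∀ i < 5, ∀ w : Fin 25,
        (closedBall (SimpleGraph.pathGraph 25) (5 - (i + 1)) w
            \ greedyCovered (SimpleGraph.pathGraph 25) 5 u i).card
          ≤ (closedBall (SimpleGraph.pathGraph 25) (5 - (i + 1)) (u i)
            \ greedyCovered (SimpleGraph.pathGraph 25) 5 u i).card) ∧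
      greedyCovered (SimpleGraph.pathGraph 25) 5 u 5 ≠ Finset.univ := by
  refine ⟨⟨![4, 12, 18, 22, 24], burn5⟩, ?_, ?_, ?_⟩
  · have hmem : 5 ∈ {p : ℕ | ∃ u : Fin p → Fin 25, ∀ v : Fin 25, ∃ i : Fin p,
        (SimpleGraph.pathGraph 25).dist v (u i) ≤ p - (i.1 + 1)} :=
      ⟨![4, 12, 18, 22, 24], burn5⟩
    have hne : {p : ℕ | ∃ u : Fin p → Fin 25, ∀ v : Fin 25, ∃ i : Fin p,
        (SimpleGraph.pathGraph 25).dist v (u i) ≤ p - (i.1 + 1)}.Nonempty := ⟨5, hmem⟩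
    refine le_antisymm (Nat.sInf_le hmem) ?_
    by_contra hlt
    push_neg at hlt
    exact no_short_burning _ hlt (Nat.sInf_mem hne)
  · have h : Real.sqrt 25 = 5 := by
      rw [show (25 : ℝ) = 5 ^ 2 by norm_num, Real.sqrt_sq (by norm_num : (0:ℝ) ≤ 5)]
    rw [h]
    norm_num
  · refine ⟨myu, ?_, ?_⟩
    · simp only [closedBall_eq, greedyCovered_eq]
      decide
    · rw [greedyCovered_eq]
      decide
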